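/- arXiv:1209.0368 — 2 statements merged into one kernel-verified Lean document; each statement's English description precedes it below -/
import Mathlib

section
/- For any λ > 0, the proximity operator of λΩ^G_p equals the identity minus the projection onto λK: prox_{λΩ^G_p}(x) = x − π_{λK}(x) for all x ∈ ℝ^d, where K = { u ∈ ℝ^d : ‖P_r u‖_q ≤ 1, r = 1,...,B }. -/
open scoped Classical ENNReal NNReal

noncomputable def pNormOn (p : ℝ≥0∞) [Fact (1 ≤ p)] {ι : Type*} [Fintype ι] (v : ι → ℝ) : ℝ :=
  ‖(WithLp.equiv p (ι → ℝ)).symm v‖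

section PN
variable {p : ℝ≥0∞} [Fact (1 ≤ p)] {ι : Type*} [Fintype ι]

lemma pNormOn_nonneg (v : ι → ℝ) : 0 ≤ pNormOn p v := norm_nonneg _

lemma pNormOn_zero : pNormOn p (fun _ : ι => (0:ℝ)) = 0 := by
  have h : (fun _ : ι => (0:ℝ)) = (0 : ι → ℝ) := rfl
  rw [pNormOn, h, WithLp.equiv_symm_apply, WithLp.toLp_zero, norm_zero]

lemma pNormOn_add_le (f g : ι → ℝ) :
    pNormOn p (fun i => f i + g i) ≤ pNormOn p f + pNormOn p g := by
  have h : (fun i => f i + g i) = f + g := rfl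
  rw [pNormOn, h, WithLp.equiv_symm_apply, WithLp.toLp_add]
  exact norm_add_le _ _

lemma pNormOn_smul (c : ℝ) (f : ι → ℝ) : pNormOn p (fun i => c * f i) = |c| * pNormOn p f := by
  have h : (fun i => c * f i) = c • f := rfl
  rw [pNormOn, h, WithLp.equiv_symm_apply, WithLp.toLp_smul, norm_smul, Real.norm_eq_abs, pNormOn, WithLp.equiv_symm_apply]

lemma pNormOn_eq_sum (hp : p ≠ ∞) (v : ι → ℝ) :
    pNormOn p v = (∑ i, |v i| ^ p.toReal) ^ (1 / p.toReal) := by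
  have h1 : (1:ℝ≥0∞) ≤ p := Fact.out
  have hp0 : 0 < p.toReal := ENNReal.toReal_pos (by rintro rfl; simp at h1) hp
  rw [pNormOn, PiLp.norm_eq_sum hp0]
  simp [Real.norm_eq_abs, WithLp.equiv_symm_apply, PiLp.toLp_apply]

lemma pNormOn_top_eq (v : ι → ℝ) : pNormOn ∞ v = ⨆ i, |v i| := by
  rw [pNormOn, PiLp.norm_eq_ciSup]
  simp [Real.norm_eq_abs, WithLp.equiv_symm_apply, PiLp.toLp_apply]

lemma pNormOn_one_eq (v : ι → ℝ) : pNormOn 1 v = ∑ i, |v i| := by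
  rw [pNormOn_eq_sum (by simp)]
  simp

lemma abs_le_pNormOn (v : ι → ℝ) (i : ι) : |v i| ≤ pNormOn p v := by
  rcases eq_or_ne p ∞ with rfl | hp
  · rw [pNormOn_top_eq]
    exact le_ciSup (f := fun j => |v j|) (Finite.bddAbove_range _) i
  · have h1 : (1:ℝ≥0∞) ≤ p := Fact.out
    have hp0 : 0 < p.toReal := ENNReal.toReal_pos (by rintro rfl; simp at h1) hp
    rw [pNormOn_eq_sum hp]
    have h2 : |v i| ^ p.toReal ≤ ∑ j, |v j| ^ p.toReal :=
      Finset.single_le_sum (fun j _ => Real.rpow_nonneg (abs_nonneg _) _) (Finset.mem_univ i)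
    have h3 : (|v i| ^ p.toReal) ^ (1/p.toReal) ≤ (∑ j, |v j| ^ p.toReal) ^ (1/p.toReal) :=
      Real.rpow_le_rpow (Real.rpow_nonneg (abs_nonneg _) _) h2 (by positivity)
    calc |v i| = (|v i| ^ p.toReal) ^ (1/p.toReal) := by
          rw [← Real.rpow_mul (abs_nonneg _), mul_one_div_cancel hp0.ne', Real.rpow_one]
      _ ≤ _ := h3

end PN

lemma conj_cases {p q : ℝ≥0∞} (hp : 1 < p) (h1q : 1 ≤ q) (hpq : 1/p + 1/q = 1) :
    (p = ∞ ∧ q = 1) ∨ (p ≠ ∞ ∧ q ≠ ∞ ∧ Real.HolderConjugate p.toReal q.toReal) := by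
  rcases eq_or_ne p ∞ with h | h
  · left
    refine ⟨h, ?_⟩
    rw [h] at hpq
    simp only [one_div, ENNReal.inv_top, zero_add] at hpq
    exact ENNReal.inv_eq_one.mp hpq
  · right
    have hp0 : p ≠ 0 := (zero_lt_one.trans hp).ne'
    have hq0 : q ≠ 0 := (zero_lt_one.trans_le h1q).ne'
    have hq : q ≠ ∞ := by
      rintro rfl
      simp only [one_div, ENNReal.inv_top, add_zero] at hpq
      exact hp.ne' (ENNReal.inv_eq_one.mp hpq)
    refine ⟨h, hq, Real.holderConjugate_iff.mpr ⟨?_, ?_⟩⟩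
    · have := ENNReal.toReal_lt_toReal ENNReal.one_ne_top h |>.2 hp
      simpa using this
    · have h2 := congrArg ENNReal.toReal hpq
      rw [one_div, one_div, ENNReal.toReal_add (ENNReal.inv_ne_top.mpr hp0)
        (ENNReal.inv_ne_top.mpr hq0), ENNReal.toReal_inv, ENNReal.toReal_inv,
        ENNReal.toReal_one] at h2
      exact h2

section Holder
variable {p q : ℝ≥0∞} [Fact (1 ≤ p)] [Fact (1 ≤ q)] {ι : Type*} [Fintype ι]

lemma pn_holder (hp : 1 < p) (hpq : 1/p + 1/q = 1) (v w : ι → ℝ) :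
    ∑ i, v i * w i ≤ pNormOn p v * pNormOn q w := by
  rcases conj_cases hp Fact.out hpq with ⟨hp', hq'⟩ | ⟨hp', hq', hc⟩
  · subst hp'; subst hq'
    calc ∑ i, v i * w i ≤ ∑ i, |v i| * |w i| :=
          Finset.sum_le_sum fun i _ => by rw [← abs_mul]; exact le_abs_self _
      _ ≤ ∑ i, pNormOn ⊤ v * |w i| :=
          Finset.sum_le_sum fun i _ =>
            mul_le_mul_of_nonneg_right (abs_le_pNormOn v i) (abs_nonneg _)
      _ = pNormOn ⊤ v * ∑ i, |w i| := by rw [← Finset.mul_sum]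
      _ = pNormOn ⊤ v * pNormOn 1 w := by rw [pNormOn_one_eq]
  · rw [pNormOn_eq_sum hp', pNormOn_eq_sum hq']
    exact Real.inner_le_Lp_mul_Lq Finset.univ v w hc

lemma pn_dual (hp : 1 < p) (hpq : 1/p + 1/q = 1) (w : ι → ℝ) :
    ∃ v : ι → ℝ, pNormOn p v ≤ 1 ∧ ∑ i, v i * w i = pNormOn q w := by
  rcases conj_cases hp Fact.out hpq with ⟨hp', hq'⟩ | ⟨hp', hq', hc⟩
  · subst hp'; subst hq'
    refine ⟨fun i => if w i < 0 then -1 else 1, ?_, ?_⟩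
    · rw [pNormOn_top_eq]
      refine Real.iSup_le (fun i => ?_) zero_le_one
      split <;> simp
    · rw [pNormOn_one_eq]
      refine Finset.sum_congr rfl fun i _ => ?_
      by_cases h : w i < 0
      · simp [h, abs_of_neg h]
      · simp [h, abs_of_nonneg (not_lt.mp h)]
  · obtain ⟨g, hg, hsum⟩ := (NNReal.isGreatest_Lp Finset.univ (fun i => ‖w i‖₊) hc.symm).1
    simp only [Set.mem_setOf_eq] at hg
    refine ⟨fun i => (if w i < 0 then -1 else 1) * (g i : ℝ), ?_, ?_⟩
    · rw [pNormOn_eq_sum hp']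
      have habs : ∀ i, |(if w i < 0 then -1 else (1:ℝ)) * (g i : ℝ)| = (g i : ℝ) := by
        intro i; rw [abs_mul]; split <;> simp
      have hsle : ∑ i, |(if w i < 0 then -1 else (1:ℝ)) * (g i : ℝ)| ^ p.toReal ≤ 1 := by
        have := NNReal.coe_le_coe.2 hg
        push_cast at this
        calc ∑ i, |(if w i < 0 then -1 else (1:ℝ)) * (g i : ℝ)| ^ p.toReal
            = ∑ i, (g i : ℝ) ^ p.toReal := by
              refine Finset.sum_congr rfl fun i _ => by rw [habs]
          _ ≤ 1 := this
      exact Real.rpow_le_one (Finset.sum_nonneg fun i _ => Real.rpow_nonneg (abs_nonneg _) _)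
        hsle (by positivity)
    · have := congrArg (fun x : ℝ≥0 => (x : ℝ)) hsum
      push_cast at this
      rw [pNormOn_eq_sum hq']
      calc ∑ i, (if w i < 0 then -1 else (1:ℝ)) * (g i : ℝ) * w i
          = ∑ i, |w i| * (g i : ℝ) := by
            refine Finset.sum_congr rfl fun i _ => ?_
            by_cases h : w i < 0
            · simp only [h, if_true]; rw [abs_of_neg h]; ring
            · simp only [h, if_false]; rw [abs_of_nonneg (not_lt.mp h)]; ring
        _ = (∑ i, |w i| ^ q.toReal) ^ (1/q.toReal) := by
            simpa [Real.norm_eq_abs] using this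
end Holder

def embed {d : ℕ} (G : Finset (Fin d)) (v : {j : Fin d // j ∈ G} → ℝ) : Fin d → ℝ :=
  fun j => if h : j ∈ G then v ⟨j, h⟩ else 0

section Embed
variable {d B : ℕ}

lemma embed_add (G : Finset (Fin d)) (v w : {j : Fin d // j ∈ G} → ℝ) :
    embed G (v + w) = embed G v + embed G w := by
  funext j; by_cases h : j ∈ G <;> simp [embed, h]

lemma embed_smul (G : Finset (Fin d)) (c : ℝ) (v : {j : Fin d // j ∈ G} → ℝ) :
    embed G (c • v) = c • embed G v := by
  funext j; by_cases h : j ∈ G <;> simp [embed, h]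

lemma dot_embed (G : Finset (Fin d)) (v : {j : Fin d // j ∈ G} → ℝ) (w : Fin d → ℝ) :
    ∑ j, embed G v j * w j = ∑ jh : {j : Fin d // j ∈ G}, v jh * w jh.1 := by
  rw [Finset.univ_eq_attach]
  have h1 : ∑ j, embed G v j * w j = ∑ j ∈ G, embed G v j * w j := by
    refine (Finset.sum_subset (Finset.subset_univ G) fun j _ hj => ?_).symm
    simp [embed, hj]
  have h2 : ∑ jh ∈ G.attach, v jh * w jh.1 = ∑ j ∈ G, embed G v j * w j := by
    rw [← Finset.sum_attach G (fun j => embed G v j * w j)]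
    refine Finset.sum_congr rfl fun jh _ => ?_
    simp [embed, jh.2]
  rw [h1, ← h2]

noncomputable def sumEmbedL (G : Fin B → Finset (Fin d)) :
    ((r : Fin B) → ({j : Fin d // j ∈ G r} → ℝ)) →ₗ[ℝ] (Fin d → ℝ) where
  toFun v := ∑ r, embed (G r) (v r)
  map_add' a b := by
    simp only [Pi.add_apply, embed_add]
    exact Finset.sum_add_distrib
  map_smul' c a := by
    simp only [Pi.smul_apply, embed_smul, RingHom.id_apply]
    exact (Finset.smul_sum).symm

end Embed

noncomputable def grpNorm {d : ℕ} (p : ℝ≥0∞) [Fact (1 ≤ p)] (G : Finset (Fin d))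
    (x : Fin d → ℝ) : ℝ :=
  pNormOn p (fun j : {j : Fin d // j ∈ G} => x j.1)

noncomputable def Omega {d B : ℕ} (p : ℝ≥0∞) [Fact (1 ≤ p)] (G : Fin B → Finset (Fin d))
    (x : Fin d → ℝ) : ℝ :=
  sInf { s | ∃ v : (r : Fin B) → {j : Fin d // j ∈ G r} → ℝ,
    (∑ r, embed (G r) (v r)) = x ∧ s = ∑ r, pNormOn p (v r) }

section OmegaL
variable {p q : ℝ≥0∞} [Fact (1 ≤ p)] [Fact (1 ≤ q)] {d B : ℕ} {G : Fin B → Finset (Fin d)}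

lemma grpNorm_combo (G₀ : Finset (Fin d)) (a b : ℝ) (f g : Fin d → ℝ) :
    grpNorm q G₀ (fun j => a * f j + b * g j) ≤ |a| * grpNorm q G₀ f + |b| * grpNorm q G₀ g := by
  calc pNormOn q (fun jh : {j : Fin d // j ∈ G₀} => a * f jh.1 + b * g jh.1)
      ≤ pNormOn q (fun jh : {j : Fin d // j ∈ G₀} => a * f jh.1)
        + pNormOn q (fun jh : {j : Fin d // j ∈ G₀} => b * g jh.1) := pNormOn_add_le _ _
    _ = |a| * grpNorm q G₀ f + |b| * grpNorm q G₀ g := by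
        rw [pNormOn_smul, pNormOn_smul]; rfl

lemma grpNorm_zero (G₀ : Finset (Fin d)) : grpNorm q G₀ (fun _ => (0:ℝ)) = 0 := pNormOn_zero

lemma exists_decomp (hcover : ∀ j : Fin d, ∃ r, j ∈ G r) (u : Fin d → ℝ) :
    ∃ v : (r : Fin B) → {j : Fin d // j ∈ G r} → ℝ, (∑ r, embed (G r) (v r)) = u := by
  choose f hf using hcover
  refine ⟨fun r => fun jh => if f jh.1 = r then u jh.1 else 0, ?_⟩
  funext j
  rw [Finset.sum_apply]
  rw [Finset.sum_eq_single (f j)]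
  · simp [embed, hf j]
  · intro r _ hr
    have hne : ¬ (f j = r) := fun hh => hr hh.symm
    by_cases h : j ∈ G r <;> simp [embed, h, hne]
  · intro h; exact absurd (Finset.mem_univ _) h

lemma sset_bddBelow (u : Fin d → ℝ) :
    BddBelow { s | ∃ v : (r : Fin B) → {j : Fin d // j ∈ G r} → ℝ,
      (∑ r, embed (G r) (v r)) = u ∧ s = ∑ r, pNormOn p (v r) } :=
  ⟨0, by rintro s ⟨v, _, rfl⟩; exact Finset.sum_nonneg fun r _ => pNormOn_nonneg _⟩

lemma omega_le_decomp (u : Fin d → ℝ) (v : (r : Fin B) → {j : Fin d // j ∈ G r} → ℝ)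
    (hv : (∑ r, embed (G r) (v r)) = u) : Omega p G u ≤ ∑ r, pNormOn p (v r) :=
  csInf_le (sset_bddBelow u) ⟨v, hv, rfl⟩

lemma dot_le_omega (hp : 1 < p) (hpq : 1/p + 1/q = 1)
    (hcover : ∀ j : Fin d, ∃ r, j ∈ G r) {lam : ℝ} (hlam : 0 < lam)
    (w : Fin d → ℝ) (hw : ∀ r, grpNorm q (G r) w ≤ lam) (u : Fin d → ℝ) :
    ∑ j, w j * u j ≤ lam * Omega p G u := by
  set S := { s | ∃ v : (r : Fin B) → {j : Fin d // j ∈ G r} → ℝ,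
      (∑ r, embed (G r) (v r)) = u ∧ s = ∑ r, pNormOn p (v r) } with hS
  obtain ⟨v₀, hv₀⟩ := exists_decomp hcover u
  have hSne : S.Nonempty := ⟨_, v₀, hv₀, rfl⟩
  have key : ∀ s ∈ S, ∑ j, w j * u j ≤ lam * s := by
    rintro s ⟨v, hv, rfl⟩
    calc ∑ j, w j * u j = ∑ j, w j * (∑ r, embed (G r) (v r)) j := by rw [hv]
      _ = ∑ r, ∑ j, embed (G r) (v r) j * w j := by
          simp only [Finset.sum_apply, Finset.mul_sum]
          rw [Finset.sum_comm]
          simp [mul_comm]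
      _ = ∑ r, ∑ jh : {j : Fin d // j ∈ G r}, v r jh * w jh.1 := by
          exact Finset.sum_congr rfl fun r _ => dot_embed _ _ _
      _ ≤ ∑ r, pNormOn p (v r) * grpNorm q (G r) w :=
          Finset.sum_le_sum fun r _ => pn_holder hp hpq _ _
      _ ≤ ∑ r, pNormOn p (v r) * lam :=
          Finset.sum_le_sum fun r _ =>
            mul_le_mul_of_nonneg_left (hw r) (pNormOn_nonneg _)
      _ = lam * ∑ r, pNormOn p (v r) := by rw [← Finset.sum_mul, mul_comm]
  have h1 : (∑ j, w j * u j) / lam ≤ sInf S :=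
    le_csInf hSne fun s hs => (div_le_iff₀ hlam).2 (by rw [mul_comm]; exact key s hs)
  have h2 := mul_le_mul_of_nonneg_left h1 hlam.le
  rwa [mul_div_cancel₀ _ hlam.ne'] at h2

end OmegaL

section VI
variable {q : ℝ≥0∞} [Fact (1 ≤ q)] {d B : ℕ} {G : Fin B → Finset (Fin d)}

lemma grpNorm_smul (G₀ : Finset (Fin d)) (c : ℝ) (z : Fin d → ℝ) :
    grpNorm q G₀ (fun j => c * z j) = |c| * grpNorm q G₀ z := pNormOn_smul c _

lemma grpNorm_nonneg (G₀ : Finset (Fin d)) (z : Fin d → ℝ) : 0 ≤ grpNorm q G₀ z :=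
  pNormOn_nonneg _

lemma vi_lemma {lam : ℝ} (hlam : 0 < lam) (x y : Fin d → ℝ)
    (hyK : ∀ r, grpNorm q (G r) y ≤ lam)
    (hymin : ∀ z : Fin d → ℝ, (∀ r, grpNorm q (G r) z ≤ lam) →
      ∑ j, (x j - y j) ^ 2 ≤ ∑ j, (x j - z j) ^ 2)
    (w : Fin d → ℝ) (hw : ∀ r, grpNorm q (G r) w ≤ lam) :
    ∑ j, (x j - y j) * (w j - y j) ≤ 0 := by
  set A := ∑ j, (x j - y j) * (w j - y j) with hA
  set Bq := ∑ j, (w j - y j) ^ 2 with hB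
  have hBq0 : 0 ≤ Bq := Finset.sum_nonneg fun j _ => sq_nonneg _
  have key : ∀ θ : ℝ, 0 < θ → θ ≤ 1 → 2 * θ * A ≤ θ ^ 2 * Bq := by
    intro θ hθ0 hθ1
    set z : Fin d → ℝ := fun j => y j + θ * (w j - y j) with hz
    have hfeas : ∀ r, grpNorm q (G r) z ≤ lam := by
      intro r
      have hze : z = fun j => (1 - θ) * y j + θ * w j := funext fun j => by simp [hz]; ring
      rw [hze]
      calc grpNorm q (G r) (fun j => (1 - θ) * y j + θ * w j)
          ≤ |1 - θ| * grpNorm q (G r) y + |θ| * grpNorm q (G r) w := grpNorm_combo _ _ _ _ _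
        _ ≤ (1 - θ) * lam + θ * lam := by
            rw [abs_of_nonneg (by linarith), abs_of_nonneg hθ0.le]
            exact add_le_add
              (mul_le_mul_of_nonneg_left (hyK r) (by linarith))
              (mul_le_mul_of_nonneg_left (hw r) hθ0.le)
        _ = lam := by ring
    have h1 := hymin z hfeas
    have h2 : ∑ j, (x j - z j) ^ 2
        = ∑ j, (x j - y j) ^ 2 - 2 * θ * A + θ ^ 2 * Bq := by
      rw [hA, hB, Finset.mul_sum, Finset.mul_sum, ← Finset.sum_sub_distrib,
        ← Finset.sum_add_distrib]
      exact Finset.sum_congr rfl fun j _ => by simp [hz]; ring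
    rw [h2] at h1
    linarith
  by_contra hcon
  push_neg at hcon
  have hA2 : 2 * A ≤ Bq := by have := key 1 one_pos le_rfl; linarith
  have hBpos : 0 < Bq := by linarith
  have hθ := key (min 1 (A / Bq)) (lt_min one_pos (div_pos hcon hBpos)) (min_le_left _ _)
  have hmin : min 1 (A / Bq) ≤ A / Bq := min_le_right _ _
  have hminpos : 0 < min 1 (A / Bq) := lt_min one_pos (div_pos hcon hBpos)
  have h5 : (min 1 (A / Bq)) * Bq ≤ A := (le_div_iff₀ hBpos).1 hmin
  nlinarith [mul_le_mul_of_nonneg_left h5 hminpos.le, mul_pos hminpos hcon]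

end VI

set_option maxHeartbeats 1000000

section SepB
variable {p q : ℝ≥0∞} [Fact (1 ≤ p)] [Fact (1 ≤ q)] {d B : ℕ} {G : Fin B → Finset (Fin d)}

lemma pNormOn_zero' {ι : Type*} [Fintype ι] : pNormOn p (0 : ι → ℝ) = 0 := pNormOn_zero

lemma embed_zero (G₀ : Finset (Fin d)) : embed G₀ (0 : {j : Fin d // j ∈ G₀} → ℝ) = 0 := by
  funext j; by_cases h : j ∈ G₀ <;> simp [embed, h]

lemma sumEmbedL_apply (G : Fin B → Finset (Fin d))
    (v : (r : Fin B) → {j : Fin d // j ∈ G r} → ℝ) :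
    sumEmbedL G v = ∑ r, embed (G r) (v r) := rfl

lemma grpNorm_eq (G₀ : Finset (Fin d)) (z : Fin d → ℝ) :
    grpNorm q G₀ z = pNormOn q (fun jh : {j : Fin d // j ∈ G₀} => z jh.1) := rfl

lemma exists_opt_decomp (hp : 1 < p) (hpq : 1/p + 1/q = 1)
    {lam : ℝ} (hlam : 0 < lam) (x y : Fin d → ℝ)
    (hyK : ∀ r, grpNorm q (G r) y ≤ lam)
    (hymin : ∀ z : Fin d → ℝ, (∀ r, grpNorm q (G r) z ≤ lam) →
      ∑ j, (x j - y j) ^ 2 ≤ ∑ j, (x j - z j) ^ 2) :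
    ∃ v : (r : Fin B) → {j : Fin d // j ∈ G r} → ℝ,
      (∑ r, embed (G r) (v r)) = (fun j => x j - y j) ∧
      lam * ∑ r, pNormOn p (v r) ≤ ∑ j, (x j - y j) * y j := by
  classical
  set u0 : Fin d → ℝ := fun j => x j - y j with hu0
  set t : ℝ := ∑ j, u0 j * y j with ht_def
  have ht : 0 ≤ t := by
    have h0 := vi_lemma hlam x y hyK hymin (fun _ => 0)
      (fun r => by rw [grpNorm_zero]; exact hlam.le)
    have hexp : ∑ j, (x j - y j) * ((fun _ => (0:ℝ)) j - y j) = -t := by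
      rw [ht_def, ← Finset.sum_neg_distrib]
      exact Finset.sum_congr rfl fun j _ => by simp only [hu0]; ring
    rw [hexp] at h0
    linarith
  set c0 : ℝ := t / lam with hc0_def
  have hc0 : 0 ≤ c0 := div_nonneg ht hlam.le
  set D : Set ((r : Fin B) → {j : Fin d // j ∈ G r} → ℝ) :=
    {v | ∑ r, pNormOn p (v r) ≤ c0} with hD_def
  have hD0 : (0 : (r : Fin B) → {j : Fin d // j ∈ G r} → ℝ) ∈ D := by
    simp only [hD_def, Set.mem_setOf_eq]
    have h : ∀ r : Fin B, pNormOn p ((0 : (r : Fin B) → {j : Fin d // j ∈ G r} → ℝ) r) = 0 :=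
      fun r => pNormOn_zero'
    rw [Finset.sum_congr rfl fun r _ => h r]
    simpa using hc0
  have hDconv : Convex ℝ D := by
    intro v hv w hw a b ha hb hab
    simp only [hD_def, Set.mem_setOf_eq] at hv hw ⊢
    calc ∑ r, pNormOn p ((a • v + b • w) r)
        ≤ ∑ r, (|a| * pNormOn p (v r) + |b| * pNormOn p (w r)) := by
          refine Finset.sum_le_sum fun r _ => ?_
          have he : ((a • v + b • w) r) = fun jh => a * v r jh + b * w r jh := rfl
          rw [he]
          calc pNormOn p (fun jh => a * v r jh + b * w r jh)
              ≤ pNormOn p (fun jh => a * v r jh) + pNormOn p (fun jh => b * w r jh) :=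
                pNormOn_add_le _ _
            _ = |a| * pNormOn p (v r) + |b| * pNormOn p (w r) := by
                rw [pNormOn_smul, pNormOn_smul]
      _ = |a| * (∑ r, pNormOn p (v r)) + |b| * (∑ r, pNormOn p (w r)) := by
          rw [Finset.sum_add_distrib, Finset.mul_sum, Finset.mul_sum]
      _ ≤ a * c0 + b * c0 := by
          rw [abs_of_nonneg ha, abs_of_nonneg hb]
          exact add_le_add (mul_le_mul_of_nonneg_left hv ha) (mul_le_mul_of_nonneg_left hw hb)
      _ = c0 := by rw [← add_mul, hab, one_mul]
  have hDclosed : IsClosed D := by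
    have hcont : Continuous (fun v : (r : Fin B) → {j : Fin d // j ∈ G r} → ℝ =>
        ∑ r, pNormOn p (v r)) := by
      refine continuous_finset_sum _ fun r _ => ?_
      exact ((PiLp.continuous_toLp p
        (fun _ : {j : Fin d // j ∈ G r} => ℝ)).comp (continuous_apply r)).norm
    have heq : D = (fun v : (r : Fin B) → {j : Fin d // j ∈ G r} → ℝ =>
        ∑ r, pNormOn p (v r)) ⁻¹' Set.Iic c0 := rfl
    rw [heq]
    exact IsClosed.preimage hcont isClosed_Iic
  have hDbdd : Bornology.IsBounded D := by
    refine (Metric.isBounded_closedBall (x := (0 : (r : Fin B) → {j : Fin d // j ∈ G r} → ℝ))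
      (r := c0)).subset ?_
    intro v hv
    simp only [hD_def, Set.mem_setOf_eq] at hv
    simp only [Metric.mem_closedBall, dist_zero_right]
    rw [pi_norm_le_iff_of_nonneg hc0]
    intro r
    rw [pi_norm_le_iff_of_nonneg hc0]
    intro jh
    rw [Real.norm_eq_abs]
    calc |v r jh| ≤ pNormOn p (v r) := abs_le_pNormOn _ _
      _ ≤ ∑ r', pNormOn p (v r') :=
          Finset.single_le_sum (fun r' _ => pNormOn_nonneg _) (Finset.mem_univ r)
      _ ≤ c0 := hv
  have hDcpt : IsCompact D := Metric.isCompact_of_isClosed_isBounded hDclosed hDbdd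
  have hLcont : Continuous (sumEmbedL G) := (sumEmbedL G).continuous_of_finiteDimensional
  have hTcpt : IsCompact (sumEmbedL G '' D) := hDcpt.image hLcont
  have hTconv : Convex ℝ (sumEmbedL G '' D) := hDconv.linear_image (sumEmbedL G)
  have hmem : u0 ∈ sumEmbedL G '' D := by
    by_contra hnot
    obtain ⟨f, c, hfT, hfx⟩ := geometric_hahn_banach_closed_point hTconv hTcpt.isClosed hnot
    set w : Fin d → ℝ := fun j => f (Pi.single j 1) with hw_def
    have hfeq : ∀ a : Fin d → ℝ, f a = ∑ j, a j * w j := by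
      intro a
      have ha : a = ∑ j, a j • (Pi.single j (1:ℝ) : Fin d → ℝ) := by
        rw [← Finset.univ_sum_single a]
        refine Finset.sum_congr rfl fun j _ => ?_
        funext k
        by_cases h : k = j <;> simp [Pi.single_apply, h]
      conv_lhs => rw [ha]
      rw [map_sum]
      simp only [map_smul, smul_eq_mul]
      rfl
    have hcpos : 0 < c := by
      have h0T : (0 : Fin d → ℝ) ∈ sumEmbedL G '' D := ⟨0, hD0, map_zero _⟩
      simpa using hfT 0 h0T
    have hMr : ∀ r, c0 * grpNorm q (G r) w < c := by
      intro r
      obtain ⟨vr, hvr1, hvr2⟩ := pn_dual hp hpq (fun jh : {j : Fin d // j ∈ G r} => w jh.1)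
      have hmemT : embed (G r) (fun jh => c0 * vr jh) ∈ sumEmbedL G '' D := by
        refine ⟨Pi.single r (fun jh => c0 * vr jh), ?_, ?_⟩
        · simp only [hD_def, Set.mem_setOf_eq]
          rw [Finset.sum_eq_single r]
          · rw [Pi.single_eq_same, pNormOn_smul, abs_of_nonneg hc0]
            calc c0 * pNormOn p vr ≤ c0 * 1 := mul_le_mul_of_nonneg_left hvr1 hc0
              _ = c0 := mul_one _
          · intro r' _ hr'
            rw [Pi.single_eq_of_ne hr', pNormOn_zero']
          · intro habs; exact absurd (Finset.mem_univ _) habs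
        · rw [sumEmbedL_apply, Finset.sum_eq_single r]
          · rw [Pi.single_eq_same]
          · intro r' _ hr'
            rw [Pi.single_eq_of_ne hr', embed_zero]
          · intro habs; exact absurd (Finset.mem_univ _) habs
      have hlt := hfT _ hmemT
      rw [hfeq, dot_embed] at hlt
      have heq2 : ∑ jh : {j : Fin d // j ∈ G r}, (c0 * vr jh) * w jh.1
          = c0 * grpNorm q (G r) w := by
        rw [grpNorm_eq, ← hvr2, Finset.mul_sum]
        exact Finset.sum_congr rfl fun jh _ => by ring
      rw [heq2] at hlt
      exact hlt
    have hA : c < ∑ j, u0 j * w j := by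
      have h := hfx
      rw [hfeq] at h
      exact h
    rcases eq_or_lt_of_le ht with hteq | htpos
    · set Msum := ∑ r, grpNorm q (G r) w with hM
      have hMsum0 : 0 ≤ Msum := Finset.sum_nonneg fun r _ => grpNorm_nonneg _ _
      set ε : ℝ := lam / (Msum + 1) with hε
      have hεpos : 0 < ε := div_pos hlam (by linarith)
      have hfeas : ∀ r, grpNorm q (G r) (fun j => ε * w j) ≤ lam := by
        intro r
        rw [grpNorm_smul, abs_of_nonneg hεpos.le]
        have h1 : grpNorm q (G r) w ≤ Msum + 1 :=
          le_trans (Finset.single_le_sum (fun r' _ => grpNorm_nonneg _ _)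
            (Finset.mem_univ r)) (by linarith)
        calc ε * grpNorm q (G r) w ≤ ε * (Msum + 1) := mul_le_mul_of_nonneg_left h1 hεpos.le
          _ = lam := by rw [hε]; field_simp
      have hvi := vi_lemma hlam x y hyK hymin _ hfeas
      have hexp : ∑ j, (x j - y j) * ((fun j => ε * w j) j - y j)
          = ε * (∑ j, u0 j * w j) - t := by
        rw [ht_def, Finset.mul_sum, ← Finset.sum_sub_distrib]
        exact Finset.sum_congr rfl fun j _ => by simp only [hu0]; ring
      rw [hexp] at hvi
      nlinarith [mul_pos hεpos (hcpos.trans hA)]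
    · set s : ℝ := t / c with hs
      have hspos : 0 < s := div_pos htpos hcpos
      have hfeas : ∀ r, grpNorm q (G r) (fun j => s * w j) ≤ lam := by
        intro r
        rw [grpNorm_smul, abs_of_nonneg hspos.le]
        have h1 := hMr r
        rw [hc0_def, div_mul_eq_mul_div] at h1
        have h2 : t * grpNorm q (G r) w < c * lam := by
          rw [div_lt_iff₀ hlam] at h1
          exact h1
        rw [hs, div_mul_eq_mul_div, div_le_iff₀ hcpos]
        nlinarith
      have hvi := vi_lemma hlam x y hyK hymin _ hfeas
      have hexp : ∑ j, (x j - y j) * ((fun j => s * w j) j - y j)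
          = s * (∑ j, u0 j * w j) - t := by
        rw [ht_def, Finset.mul_sum, ← Finset.sum_sub_distrib]
        exact Finset.sum_congr rfl fun j _ => by simp only [hu0]; ring
      rw [hexp] at hvi
      have hsc : s * c = t := by rw [hs]; field_simp
      have hlt2 : s * c < s * (∑ j, u0 j * w j) := mul_lt_mul_of_pos_left hA hspos
      linarith
  obtain ⟨v, hvD, hveq⟩ := hmem
  rw [sumEmbedL_apply] at hveq
  simp only [hD_def, Set.mem_setOf_eq] at hvD
  refine ⟨v, hveq, ?_⟩
  calc lam * ∑ r, pNormOn p (v r) ≤ lam * c0 := mul_le_mul_of_nonneg_left hvD hlam.le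
    _ = t := by rw [hc0_def]; field_simp

end SepB

noncomputable def nrm2 {d : ℕ} (x : Fin d → ℝ) : ℝ := Real.sqrt (∑ j, (x j) ^ 2)

/-- The proximity operator of `λ Ω^G_p` is the identity minus the projection onto `λK`:
if `y` is the Euclidean projection of `x` onto `λK`, then `x - y` is the (unique) minimizer
of `u ↦ (1/2)‖u - x‖² + λ Ω^G_p(u)`. -/
theorem stmt3 (p q : ℝ≥0∞) [Fact (1 ≤ p)] [Fact (1 ≤ q)] (hp : 1 < p) (hpq : 1/p + 1/q = 1)
    {d B : ℕ} (G : Fin B → Finset (Fin d)) (hcover : ∀ j : Fin d, ∃ r, j ∈ G r)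
    (lam : ℝ) (hlam : 0 < lam) (x y : Fin d → ℝ)
    (hyK : ∀ r, grpNorm q (G r) y ≤ lam)
    (hymin : ∀ z : Fin d → ℝ, (∀ r, grpNorm q (G r) z ≤ lam) →
      ∑ j, (x j - y j) ^ 2 ≤ ∑ j, (x j - z j) ^ 2) :
    (∀ u : Fin d → ℝ,
        (1/2) * ∑ j, ((x - y) j - x j) ^ 2 + lam * Omega p G (x - y) ≤
          (1/2) * ∑ j, (u j - x j) ^ 2 + lam * Omega p G u) ∧
    (∀ u : Fin d → ℝ,
        (1/2) * ∑ j, (u j - x j) ^ 2 + lam * Omega p G u =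
          (1/2) * ∑ j, ((x - y) j - x j) ^ 2 + lam * Omega p G (x - y) → u = x - y) := by
  classical
  have hAle : ∀ u : Fin d → ℝ, ∑ j, y j * u j ≤ lam * Omega p G u :=
    fun u => dot_le_omega hp hpq hcover hlam y hyK u
  obtain ⟨v, hvsum, hvcost⟩ := exists_opt_decomp hp hpq hlam x y hyK hymin
  have hOmega_le : lam * Omega p G (x - y) ≤ ∑ j, (x j - y j) * y j := by
    have h1 : Omega p G (x - y) ≤ ∑ r, pNormOn p (v r) :=
      omega_le_decomp (x - y) v (by rw [hvsum]; funext j; simp [Pi.sub_apply])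
    calc lam * Omega p G (x - y) ≤ lam * ∑ r, pNormOn p (v r) :=
          mul_le_mul_of_nonneg_left h1 hlam.le
      _ ≤ _ := hvcost
  set Φ : ℝ := ∑ j, x j * y j - (1/2) * ∑ j, (y j)^2 with hΦ
  have key1 : ∀ u : Fin d → ℝ,
      (1/2) * (∑ j, (u j - x j + y j)^2) + Φ ≤ (1/2) * ∑ j, (u j - x j)^2 + lam * Omega p G u := by
    intro u
    have h2 : (1/2) * ∑ j, (u j - x j)^2 + ∑ j, y j * u j
        = (1/2) * (∑ j, (u j - x j + y j)^2) + Φ := by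
      calc (1/2) * ∑ j, (u j - x j)^2 + ∑ j, y j * u j
          = ∑ j, ((1/2) * (u j - x j)^2 + y j * u j) := by
            rw [Finset.mul_sum, Finset.sum_add_distrib]
        _ = ∑ j, ((1/2) * (u j - x j + y j)^2 + (x j * y j - (1/2) * (y j)^2)) :=
            Finset.sum_congr rfl fun j _ => by ring
        _ = (1/2) * (∑ j, (u j - x j + y j)^2) + Φ := by
            rw [hΦ, Finset.sum_add_distrib, Finset.mul_sum, Finset.sum_sub_distrib,
              Finset.mul_sum]
    linarith [hAle u]
  have key2 : (1/2) * ∑ j, ((x - y) j - x j)^2 + lam * Omega p G (x - y) ≤ Φ := by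
    have he : ∑ j, ((x - y) j - x j)^2 = ∑ j, (y j)^2 :=
      Finset.sum_congr rfl fun j _ => by simp only [Pi.sub_apply]; ring
    have hsplit : ∑ j, (x j - y j) * y j = ∑ j, x j * y j - ∑ j, (y j)^2 := by
      rw [← Finset.sum_sub_distrib]
      exact Finset.sum_congr rfl fun j _ => by ring
    rw [he]
    rw [hsplit] at hOmega_le
    rw [hΦ]
    linarith
  constructor
  · intro u
    have k1 := key1 u
    have hnn : 0 ≤ ∑ j, (u j - x j + y j)^2 := Finset.sum_nonneg fun j _ => sq_nonneg _
    linarith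
  · intro u hu
    have k1 := key1 u
    have hs0 : ∑ j, (u j - x j + y j)^2 ≤ 0 := by linarith
    have hz : ∀ j ∈ Finset.univ, (u j - x j + y j)^2 = 0 := by
      rw [← Finset.sum_eq_zero_iff_of_nonneg (fun j _ => sq_nonneg _)]
      exact le_antisymm hs0 (Finset.sum_nonneg fun j _ => sq_nonneg _)
    funext j
    have := hz j (Finset.mem_univ j)
    have h0 : u j - x j + y j = 0 := by
      have := sq_eq_zero_iff.mp this
      exact this
    simp only [Pi.sub_apply]
    linarith
end

section
/- Active set reduction for the projection: let G = {G_1,...,G_B} be groups, q ∈ [1,∞], λ > 0, K = ∩_{r} { x : ‖P_{G_r} x‖_q ≤ λ } and, for w ∈ ℝ^d, let Ĝ = { G_r : ‖P_{G_r} w‖_q > λ }. Then π_K(w) = π_{K̂}(w), where K̂ = ∩_{G∈Ĝ} { x : ‖P_G x‖_q ≤ λ } (with K̂ = ℝ^d if Ĝ is empty, in which case π_K(w) = w). -/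
open scoped Classical ENNReal NNReal

lemma pNormOn_mono (p : ℝ≥0∞) [Fact (1 ≤ p)] {ι : Type*} [Fintype ι] {a b : ι → ℝ}
    (h : ∀ i, |a i| ≤ |b i|) : pNormOn p a ≤ pNormOn p b := by
  unfold pNormOn
  rcases eq_or_ne p ∞ with hp | hp
  · subst hp
    rw [WithLp.equiv_symm_apply, PiLp.norm_toLp, PiLp.norm_toLp]
    refine pi_norm_le_iff_of_nonneg (norm_nonneg _) |>.2 fun i => ?_
    calc ‖a i‖ = |a i| := Real.norm_eq_abs _
    _ ≤ |b i| := h i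
    _ = ‖b i‖ := (Real.norm_eq_abs _).symm
    _ ≤ ‖b‖ := norm_le_pi_norm b i
  · have hp0 : 0 < p.toReal := ENNReal.toReal_pos (by
      have := (Fact.out : (1:ℝ≥0∞) ≤ p); intro h0; simp [h0] at this) hp
    rw [PiLp.norm_eq_sum hp0, PiLp.norm_eq_sum hp0]
    apply Real.rpow_le_rpow (Finset.sum_nonneg fun i _ => Real.rpow_nonneg (norm_nonneg _) _)
    · refine Finset.sum_le_sum fun i _ => ?_
      apply Real.rpow_le_rpow (norm_nonneg _) ?_ hp0.le
      simpa [Real.norm_eq_abs] using h i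
    · positivity

lemma pNormOn_add_le_s6 (p : ℝ≥0∞) [Fact (1 ≤ p)] {ι : Type*} [Fintype ι] (a b : ι → ℝ) :
    pNormOn p (a + b) ≤ pNormOn p a + pNormOn p b := by
  unfold pNormOn
  rw [WithLp.equiv_symm_apply, WithLp.toLp_add]
  exact norm_add_le _ _

lemma pNormOn_smul_s6 (p : ℝ≥0∞) [Fact (1 ≤ p)] {ι : Type*} [Fintype ι] (c : ℝ) (a : ι → ℝ) :
    pNormOn p (c • a) = |c| * pNormOn p a := by
  unfold pNormOn
  rw [WithLp.equiv_symm_apply, WithLp.toLp_smul, norm_smul, Real.norm_eq_abs]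

lemma clip_facts (w t : ℝ) :
    |min (max t (min 0 w)) (max 0 w)| ≤ |t| ∧
    |min (max t (min 0 w)) (max 0 w)| ≤ |w| ∧
    (w - min (max t (min 0 w)) (max 0 w))^2 ≤ (w - t)^2 ∧
    ((w - min (max t (min 0 w)) (max 0 w))^2 = (w - t)^2 →
      min (max t (min 0 w)) (max 0 w) = t) := by
  rcases le_total 0 w with hw | hw
  · rw [min_eq_left hw, max_eq_right hw]
    rcases le_total t 0 with ht | ht
    · rw [max_eq_right ht, min_eq_left hw]
      refine ⟨by simp, by simp, by nlinarith [mul_nonneg hw (neg_nonneg.2 ht)], fun he => ?_⟩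
      have h2 : t ^ 2 ≤ 0 := by nlinarith [mul_nonneg hw (neg_nonneg.2 ht)]
      have : t = 0 := by nlinarith [sq_nonneg t]
      linarith
    · rw [max_eq_left ht]
      rcases le_total t w with htw | htw
      · rw [min_eq_left htw]
        exact ⟨le_rfl, by rw [abs_of_nonneg ht, abs_of_nonneg hw]; exact htw, le_rfl, fun _ => rfl⟩
      · rw [min_eq_right htw]
        refine ⟨by rw [abs_of_nonneg hw, abs_of_nonneg ht]; exact htw, le_rfl, by nlinarith,
          fun he => ?_⟩
        have : (w - t) ^ 2 = 0 := by linarith [he.symm]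
        have := pow_eq_zero_iff (n := 2) (by norm_num) |>.1 this
        linarith
  · rw [min_eq_right hw, max_eq_left hw]
    rcases le_total 0 t with ht | ht
    · rw [max_eq_left (hw.trans ht), min_eq_right ht]
      refine ⟨by simp, by simp, by nlinarith [mul_nonpos_of_nonpos_of_nonneg hw ht], fun he => ?_⟩
      have h2 : t ^ 2 ≤ 0 := by nlinarith [mul_nonpos_of_nonpos_of_nonneg hw ht]
      have : t = 0 := by nlinarith [sq_nonneg t]
      linarith
    · rcases le_total w t with htw | htw
      · rw [max_eq_left htw, min_eq_left ht]
        exact ⟨le_rfl, by rw [abs_of_nonpos ht, abs_of_nonpos hw]; linarith, le_rfl, fun _ => rfl⟩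
      · rw [max_eq_right htw, min_eq_left hw]
        refine ⟨by rw [abs_of_nonpos hw, abs_of_nonpos ht]; linarith, le_rfl, by nlinarith,
          fun he => ?_⟩
        have : (w - t) ^ 2 = 0 := by linarith [he.symm]
        have := pow_eq_zero_iff (n := 2) (by norm_num) |>.1 this
        linarith

/-- Active set reduction: the projection of `w` onto the intersection of all the group
constraints coincides with the projection onto the intersection of the active constraints
`Ĝ = { r : ‖P_{G_r} w‖_q > λ }` only. -/
theorem stmt6 (q : ℝ≥0∞) [Fact (1 ≤ q)] {d B : ℕ} (G : Fin B → Finset (Fin d))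
    (lam : ℝ) (hlam : 0 < lam) (w y z : Fin d → ℝ)
    (hyK : ∀ r, grpNorm q (G r) y ≤ lam)
    (hymin : ∀ u : Fin d → ℝ, (∀ r, grpNorm q (G r) u ≤ lam) →
      ∑ j, (w j - y j) ^ 2 ≤ ∑ j, (w j - u j) ^ 2)
    (hzK : ∀ r, lam < grpNorm q (G r) w → grpNorm q (G r) z ≤ lam)
    (hzmin : ∀ u : Fin d → ℝ, (∀ r, lam < grpNorm q (G r) w → grpNorm q (G r) u ≤ lam) →
      ∑ j, (w j - z j) ^ 2 ≤ ∑ j, (w j - u j) ^ 2) :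
    y = z := by
  classical
  set z' : Fin d → ℝ := fun j => min (max (z j) (min 0 (w j))) (max 0 (w j)) with hz'def
  have hfacts : ∀ j, |z' j| ≤ |z j| ∧ |z' j| ≤ |w j| ∧
      (w j - z' j)^2 ≤ (w j - z j)^2 ∧
      ((w j - z' j)^2 = (w j - z j)^2 → z' j = z j) := fun j => clip_facts (w j) (z j)
  -- z' satisfies the active constraints
  have hz'act : ∀ r, lam < grpNorm q (G r) w → grpNorm q (G r) z' ≤ lam := by
    intro r hr
    exact le_trans (pNormOn_mono q (fun i => (hfacts i.1).1)) (hzK r hr)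
  have hle : ∑ j, (w j - z j) ^ 2 ≤ ∑ j, (w j - z' j) ^ 2 := hzmin z' hz'act
  have hsum : ∑ j, (w j - z' j) ^ 2 ≤ ∑ j, (w j - z j) ^ 2 :=
    Finset.sum_le_sum fun j _ => (hfacts j).2.2.1
  have hsumeq : ∑ j, (w j - z' j) ^ 2 = ∑ j, (w j - z j) ^ 2 := le_antisymm hsum hle
  have heq : ∀ j ∈ Finset.univ, (w j - z' j) ^ 2 = (w j - z j) ^ 2 :=
    (Finset.sum_eq_sum_iff_of_le (fun j _ => (hfacts j).2.2.1)).1 hsumeq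
  have hzz' : z' = z := funext fun j => (hfacts j).2.2.2 (heq j (Finset.mem_univ j))
  have habsz : ∀ j, |z j| ≤ |w j| := fun j => hzz' ▸ (hfacts j).2.1
  -- z satisfies all constraints
  have hzKfull : ∀ r, grpNorm q (G r) z ≤ lam := by
    intro r
    by_cases hr : lam < grpNorm q (G r) w
    · exact hzK r hr
    · exact le_trans (pNormOn_mono q (fun i => habsz i.1)) (le_of_not_gt hr)
  -- distances are equal
  have hSyz : ∑ j, (w j - y j) ^ 2 ≤ ∑ j, (w j - z j) ^ 2 := hymin z hzKfull
  have hSzy : ∑ j, (w j - z j) ^ 2 ≤ ∑ j, (w j - y j) ^ 2 :=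
    hzmin y (fun r _ => hyK r)
  -- midpoint
  set m : Fin d → ℝ := fun j => (y j + z j) / 2 with hmdef
  have hmact : ∀ r, lam < grpNorm q (G r) w → grpNorm q (G r) m ≤ lam := by
    intro r hr
    have hrepr : (fun i : {j : Fin d // j ∈ G r} => m i.1) =
        (1 / 2 : ℝ) • ((fun i : {j : Fin d // j ∈ G r} => y i.1) +
          (fun i : {j : Fin d // j ∈ G r} => z i.1)) := by
      funext i
      simp [hmdef]
      ring
    have : grpNorm q (G r) m ≤ (grpNorm q (G r) y + grpNorm q (G r) z) / 2 := by
      unfold grpNorm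
      rw [hrepr, pNormOn_smul_s6]
      have := pNormOn_add_le_s6 q (fun i : {j : Fin d // j ∈ G r} => y i.1)
        (fun i : {j : Fin d // j ∈ G r} => z i.1)
      rw [abs_of_pos (by norm_num : (0:ℝ) < 1/2)]
      linarith
    linarith [hyK r, hzK r hr]
  have hzm : ∑ j, (w j - z j) ^ 2 ≤ ∑ j, (w j - m j) ^ 2 := hzmin m hmact
  have hmid : ∑ j, (w j - m j) ^ 2 =
      (∑ j, (w j - y j) ^ 2) / 2 + (∑ j, (w j - z j) ^ 2) / 2 - (∑ j, (y j - z j) ^ 2) / 4 := by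
    have hterm : ∀ j, (w j - m j) ^ 2 =
        (w j - y j) ^ 2 / 2 + (w j - z j) ^ 2 / 2 - (y j - z j) ^ 2 / 4 := fun j => by
      simp only [hmdef]; ring
    simp_rw [hterm]
    rw [Finset.sum_sub_distrib, Finset.sum_add_distrib, ← Finset.sum_div, ← Finset.sum_div,
      ← Finset.sum_div]
  have hD : ∑ j, (y j - z j) ^ 2 ≤ 0 := by linarith
  have hD0 : ∑ j, (y j - z j) ^ 2 = 0 :=
    le_antisymm hD (Finset.sum_nonneg fun j _ => sq_nonneg _)
  funext j
  have := (Finset.sum_eq_zero_iff_of_nonneg (fun j _ => sq_nonneg (y j - z j))).1 hD0 j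
    (Finset.mem_univ j)
  have := pow_eq_zero_iff (n := 2) (by norm_num) |>.1 this
  linarith
end
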